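/- Define partial maps R₁, R₂ on ℂ³ by R₁(z₁, z₂, z₃) := ( conj(z₂)·(z₁+z₂)/(conj(z₁)+conj(z₂)), conj(z₁)·(z₁+z₂)/(conj(z₁)+conj(z₂)), z₃ ) and R₂(z₁, z₂, z₃) := ( z₁, conj(z₃)·(z₂+z₃)/(conj(z₂)+conj(z₃)), conj(z₂)·(z₂+z₃)/(conj(z₂)+conj(z₃)) ). Let v = (z₁, z₂, z₃) ∈ ℂ³ and assume all six of the following sums are nonzero: z₁ + z₂; z₂ + z₃; the sum of the second and third components of R₁(v); the sum of the first and second components of R₂(v); the sum of the second and third components of R₂(R₁(v)); and the sum of the first and second components of R₁(R₂(v)). Then R₁(R₂(R₁(v))) = R₂(R₁(R₂(v))) (the braid relation ρ_i ρ_{i+1} ρ_i = ρ_{i+1} ρ_i ρ_{i+1} for recuttings at adjacent vertices). -/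

import Mathlib

open Complex

/-- Recutting at the first of two adjacent vertices, acting on the triple of
consecutive edge vectors `(z₁, z₂, z₃)`. -/
noncomputable def R₁ (v : ℂ × ℂ × ℂ) : ℂ × ℂ × ℂ :=
  ((starRingEnd ℂ) v.2.1 * (v.1 + v.2.1) / ((starRingEnd ℂ) v.1 + (starRingEnd ℂ) v.2.1),
   (starRingEnd ℂ) v.1 * (v.1 + v.2.1) / ((starRingEnd ℂ) v.1 + (starRingEnd ℂ) v.2.1),
   v.2.2)

/-- Recutting at the second of two adjacent vertices, acting on the triple of
consecutive edge vectors `(z₁, z₂, z₃)`. -/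
noncomputable def R₂ (v : ℂ × ℂ × ℂ) : ℂ × ℂ × ℂ :=
  (v.1,
   (starRingEnd ℂ) v.2.2 * (v.2.1 + v.2.2) / ((starRingEnd ℂ) v.2.1 + (starRingEnd ℂ) v.2.2),
   (starRingEnd ℂ) v.2.1 * (v.2.1 + v.2.2) / ((starRingEnd ℂ) v.2.1 + (starRingEnd ℂ) v.2.2))

set_option maxHeartbeats 1000000 in
private lemma evalL (a b c A B C : ℂ) (ha : (starRingEnd ℂ) a = A) (hb : (starRingEnd ℂ) b = B)
    (hc : (starRingEnd ℂ) c = C)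
    (hA : (starRingEnd ℂ) A = a) (hB : (starRingEnd ℂ) B = b) (hC : (starRingEnd ℂ) C = c)
    (hs : a + b ≠ 0) (hS : A + B ≠ 0)
    (hm : A*(a+b) + c*(A+B) ≠ 0) (hn : a*(A+B) + C*(a+b) ≠ 0)
    (hK : a*(B+C) + C*(b+c) ≠ 0) (hK2 : A*(b+c) + c*(B+C) ≠ 0) :
    R₁ (R₂ (R₁ (a, b, c)))
      = (c*(a*(B+C)+C*(b+c))/(A*(b+c)+c*(B+C)),
         b*(a*(B+C)+C*(b+c))*(A*(a+b)+c*(A+B))/((a*(A+B)+C*(a+b))*(A*(b+c)+c*(B+C))),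
         a*(A*(a+b)+c*(A+B))/(a*(A+B)+C*(a+b))) := by
  have E1 : R₁ (a, b, c) = (B*(a+b)/(A+B), A*(a+b)/(A+B), c) := by
    simp only [R₁, ha, hb]
  have E2 : R₂ (B*(a+b)/(A+B), A*(a+b)/(A+B), c)
      = (B*(a+b)/(A+B),
         C*(a+b)*(A*(a+b)+c*(A+B))/((A+B)*(a*(A+B)+C*(a+b))),
         a*(A*(a+b)+c*(A+B))/(a*(A+B)+C*(a+b))) := by
    simp only [R₂, map_div₀, map_mul, map_add, ha, hb, hc, hA, hB, hC]
    refine Prod.ext rfl (Prod.ext ?_ ?_) <;> simp only <;> field_simp <;> ring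
  rw [E1, E2]
  set x := B*(a+b)/(A+B) with hx
  set y := C*(a+b)*(A*(a+b)+c*(A+B))/((A+B)*(a*(A+B)+C*(a+b))) with hy
  have cx : (starRingEnd ℂ) x = b*(A+B)/(a+b) := by
    simp only [hx, map_div₀, map_mul, map_add, ha, hb, hA, hB]
  have cy : (starRingEnd ℂ) y = c*(A+B)*(a*(A+B)+C*(a+b))/((a+b)*(A*(a+b)+c*(A+B))) := by
    simp only [hy, map_div₀, map_mul, map_add, ha, hb, hc, hA, hB, hC]
  have hsum : x + y = (a+b)*(a*(B+C)+C*(b+c))/(a*(A+B)+C*(a+b)) := by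
    rw [hx, hy]; rw [div_add_div _ _ hS (mul_ne_zero hS hn), div_eq_div_iff (mul_ne_zero hS (mul_ne_zero hS hn)) hn]; ring
  have hconjsum : (starRingEnd ℂ) x + (starRingEnd ℂ) y
      = (A+B)*(A*(b+c)+c*(B+C))/(A*(a+b)+c*(A+B)) := by
    rw [cx, cy]; rw [div_add_div _ _ hs (mul_ne_zero hs hm), div_eq_div_iff (mul_ne_zero hs (mul_ne_zero hs hm)) hm]; ring
  simp only [R₁]
  refine Prod.ext ?_ (Prod.ext ?_ rfl)
  · show (starRingEnd ℂ) y * (x + y) / ((starRingEnd ℂ) x + (starRingEnd ℂ) y) = _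
    rw [hsum, hconjsum, cy]; rw [div_mul_div_comm, div_div_div_eq, div_eq_div_iff (mul_ne_zero (mul_ne_zero (mul_ne_zero hs hm) hn) (mul_ne_zero hS hK2)) hK2]; ring
  · show (starRingEnd ℂ) x * (x + y) / ((starRingEnd ℂ) x + (starRingEnd ℂ) y) = _
    rw [hsum, hconjsum, cx]; field_simp

set_option maxHeartbeats 1000000 in
private lemma evalR (a b c A B C : ℂ) (ha : (starRingEnd ℂ) a = A) (hb : (starRingEnd ℂ) b = B)
    (hc : (starRingEnd ℂ) c = C)
    (hA : (starRingEnd ℂ) A = a) (hB : (starRingEnd ℂ) B = b) (hC : (starRingEnd ℂ) C = c)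
    (ht : b + c ≠ 0) (hT : B + C ≠ 0)
    (hm : A*(a+b) + c*(A+B) ≠ 0) (hn : a*(A+B) + C*(a+b) ≠ 0)
    (hK : a*(B+C) + C*(b+c) ≠ 0) (hK2 : A*(b+c) + c*(B+C) ≠ 0) :
    R₂ (R₁ (R₂ (a, b, c)))
      = (c*(a*(B+C)+C*(b+c))/(A*(b+c)+c*(B+C)),
         b*(a*(B+C)+C*(b+c))*(A*(a+b)+c*(A+B))/((a*(A+B)+C*(a+b))*(A*(b+c)+c*(B+C))),
         a*(A*(a+b)+c*(A+B))/(a*(A+B)+C*(a+b))) := by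
  have E1 : R₂ (a, b, c) = (a, C*(b+c)/(B+C), B*(b+c)/(B+C)) := by
    simp only [R₂, hb, hc]
  have E2 : R₁ (a, C*(b+c)/(B+C), B*(b+c)/(B+C))
      = (c*(a*(B+C)+C*(b+c))/(A*(b+c)+c*(B+C)),
         A*(b+c)*(a*(B+C)+C*(b+c))/((B+C)*(A*(b+c)+c*(B+C))),
         B*(b+c)/(B+C)) := by
    simp only [R₁, map_div₀, map_mul, map_add, ha, hb, hc, hA, hB, hC]
    refine Prod.ext ?_ (Prod.ext ?_ rfl) <;> simp only <;> field_simp <;> ring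
  rw [E1, E2]
  set x := c*(a*(B+C)+C*(b+c))/(A*(b+c)+c*(B+C)) with hx
  set y := A*(b+c)*(a*(B+C)+C*(b+c))/((B+C)*(A*(b+c)+c*(B+C))) with hy
  set z := B*(b+c)/(B+C) with hz
  have cy : (starRingEnd ℂ) y = a*(B+C)*(A*(b+c)+c*(B+C))/((b+c)*(a*(B+C)+C*(b+c))) := by
    simp only [hy, map_div₀, map_mul, map_add, ha, hb, hc, hA, hB, hC]
  have cz : (starRingEnd ℂ) z = b*(B+C)/(b+c) := by
    simp only [hz, map_div₀, map_mul, map_add, hb, hc, hB, hC]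
  have hsum : y + z = (b+c)*(A*(a+b)+c*(A+B))/(A*(b+c)+c*(B+C)) := by
    rw [hy, hz]; field_simp; ring
  have hconjsum : (starRingEnd ℂ) y + (starRingEnd ℂ) z
      = (B+C)*(a*(A+B)+C*(a+b))/(a*(B+C)+C*(b+c)) := by
    rw [cy, cz]; field_simp; ring
  simp only [R₂]
  refine Prod.ext rfl (Prod.ext ?_ ?_)
  · show (starRingEnd ℂ) z * (y + z) / ((starRingEnd ℂ) y + (starRingEnd ℂ) z) = _
    rw [hsum, hconjsum, cz]; field_simp
  · show (starRingEnd ℂ) y * (y + z) / ((starRingEnd ℂ) y + (starRingEnd ℂ) z) = _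
    rw [hsum, hconjsum, cy]; rw [div_mul_div_comm, div_div_div_eq, div_eq_div_iff (mul_ne_zero (mul_ne_zero (mul_ne_zero ht hK) hK2) (mul_ne_zero hT hn)) hn]; ring

/-- The braid relation `ρ_i ρ_{i+1} ρ_i = ρ_{i+1} ρ_i ρ_{i+1}` for recuttings at two
adjacent vertices, wherever all the intermediate recuttings are defined. -/
theorem braid_relation (v : ℂ × ℂ × ℂ)
    (h₁ : v.1 + v.2.1 ≠ 0)
    (h₂ : v.2.1 + v.2.2 ≠ 0)
    (h₃ : (R₁ v).2.1 + (R₁ v).2.2 ≠ 0)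
    (h₄ : (R₂ v).1 + (R₂ v).2.1 ≠ 0)
    (h₅ : (R₂ (R₁ v)).2.1 + (R₂ (R₁ v)).2.2 ≠ 0)
    (h₆ : (R₁ (R₂ v)).1 + (R₁ (R₂ v)).2.1 ≠ 0) :
    R₁ (R₂ (R₁ v)) = R₂ (R₁ (R₂ v)) := by
  obtain ⟨a, b, c⟩ := v
  clear h₅ h₆
  simp only [R₁, R₂] at h₃ h₄
  obtain ⟨A, ha⟩ : ∃ x, (starRingEnd ℂ) a = x := ⟨_, rfl⟩
  obtain ⟨B, hb⟩ : ∃ x, (starRingEnd ℂ) b = x := ⟨_, rfl⟩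
  obtain ⟨C, hc⟩ : ∃ x, (starRingEnd ℂ) c = x := ⟨_, rfl⟩
  rw [ha, hb] at h₃
  rw [hb, hc] at h₄
  have hA : (starRingEnd ℂ) A = a := by rw [← ha, Complex.conj_conj]
  have hB : (starRingEnd ℂ) B = b := by rw [← hb, Complex.conj_conj]
  have hC : (starRingEnd ℂ) C = c := by rw [← hc, Complex.conj_conj]
  have hs : a + b ≠ 0 := h₁
  have ht : b + c ≠ 0 := h₂
  have conj_ne : ∀ z : ℂ, z ≠ 0 → (starRingEnd ℂ) z ≠ 0 := fun z hz => by
    simpa using hz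
  have hS : A + B ≠ 0 := by
    have := conj_ne _ hs; rwa [map_add, ha, hb] at this
  have hT : B + C ≠ 0 := by
    have := conj_ne _ ht; rwa [map_add, hb, hc] at this
  have hm : A*(a+b) + c*(A+B) ≠ 0 := by
    intro h
    apply h₃
    have e : A * (a + b) / (A + B) + c = (A*(a+b) + c*(A+B)) / (A+B) := by
      field_simp
    rw [e, h, zero_div]
  have hn : a*(A+B) + C*(a+b) ≠ 0 := by
    have := conj_ne _ hm
    rwa [map_add, map_mul, map_mul, map_add, map_add, ha, hb, hc, hA, hB] at this
  have hK : a*(B+C) + C*(b+c) ≠ 0 := by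
    intro h
    apply h₄
    have e : a + C * (b + c) / (B + C) = (a*(B+C) + C*(b+c)) / (B+C) := by
      field_simp
    rw [e, h, zero_div]
  have hK2 : A*(b+c) + c*(B+C) ≠ 0 := by
    have := conj_ne _ hK
    rwa [map_add, map_mul, map_mul, map_add, map_add, ha, hb, hc, hB, hC] at this
  rw [evalL a b c A B C ha hb hc hA hB hC hs hS hm hn hK hK2,
      evalR a b c A B C ha hb hc hA hB hC ht hT hm hn hK hK2]
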